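/- Let f₁,…,f_M : (Fin s → ℝ) → ℝ be measurable, square-integrable and linearly independent functions, let A be a tensor of order N and dimension M in each mode, and let h be the function realized with coefficient tensor A. Then for any partition of Fin N into disjoint subsets I and J with I ∪ J = univ, the separation rank of h with respect to (I,J) equals the rank of the matricization ⟦A⟧_{I,J}: sep(h; I, J) = rank ⟦A⟧_{I,J}. -/

import Mathlib

open Finset Matrix

lemma tensorLI_fin {α : Type*} {M : ℕ} {f : Fin M → α → ℝ} (hf : LinearIndependent ℝ f) :
    ∀ k : ℕ, LinearIndependent ℝ
      (fun (u : Fin k → Fin M) => (fun (y : Fin k → α) => ∏ i, f (u i) (y i))) := by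
  intro k
  induction k with
  | zero =>
      apply linearIndependent_unique_iff.2
      intro h
      have := congrFun h (fun i => i.elim0)
      simpa using this
  | succ k ih =>
      refine Fintype.linearIndependent_iff.2 fun c hc u => ?_
      have key : ∀ (m : Fin M) (w : Fin k → Fin M), c (Fin.cons m w) = 0 := by
        intro m w
        have h1 : ∀ t : Fin k → α,
            ∑ m' : Fin M, (∑ w' : Fin k → Fin M,
              c (Fin.cons m' w') * ∏ i, f (w' i) (t i)) • f m' = 0 := by
          intro t
          funext a
          have h0 := congrFun hc (Fin.cons a t)
          simp only [Finset.sum_apply, Pi.smul_apply, smul_eq_mul, Pi.zero_apply] at h0 ⊢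
          rw [← h0]
          rw [← Equiv.sum_comp (Fin.consEquiv (fun _ : Fin (k+1) => Fin M))
            (fun d => c d * ∏ i, f (d i) ((Fin.cons a t : Fin (k+1) → α) i))]
          simp only [Fin.consEquiv, Equiv.coe_fn_mk, Fin.prod_univ_succ, Fin.cons_zero, Fin.cons_succ]
          rw [Fintype.sum_prod_type]
          refine Finset.sum_congr rfl fun m' _ => ?_
          rw [Finset.sum_mul]
          refine Finset.sum_congr rfl fun w' _ => ?_
          simp only [Fin.consEquiv, Equiv.coe_fn_mk]
          ring
        have h2 : ∀ t : Fin k → α, ∀ m' : Fin M,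
            (∑ w' : Fin k → Fin M, c (Fin.cons m' w') * ∏ i, f (w' i) (t i)) = 0 := by
          intro t m'
          exact Fintype.linearIndependent_iff.1 hf _ (h1 t) m'
        have h3 : (∑ w' : Fin k → Fin M, c (Fin.cons m w') •
            (fun (t : Fin k → α) => ∏ i, f (w' i) (t i))) = 0 := by
          funext t
          simpa [Finset.sum_apply] using h2 t m
        exact Fintype.linearIndependent_iff.1 ih _ h3 w
      have := key (u 0) (Fin.tail u)
      rwa [Fin.cons_self_tail u] at this

lemma tensorLI {α ι : Type*} [Fintype ι] {M : ℕ} {f : Fin M → α → ℝ}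
    (hf : LinearIndependent ℝ f) :
    LinearIndependent ℝ
      (fun (u : ι → Fin M) => (fun (y : ι → α) => ∏ i, f (u i) (y i))) := by
  classical
  let k := Fintype.card ι
  let e : Fin k ≃ ι := (Fintype.equivFin ι).symm
  -- linear map reindexing the argument
  let Ψ : ((Fin k → α) → ℝ) →ₗ[ℝ] ((ι → α) → ℝ) :=
    { toFun := fun φ => fun y => φ (fun j => y (e j))
      map_add' := fun φ₁ φ₂ => rfl
      map_smul' := fun r φ => rfl }
  have hΨ : LinearMap.ker Ψ = ⊥ := by
    rw [LinearMap.ker_eq_bot']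
    intro φ hφ
    funext z
    have := congrFun hφ (fun i => z (e.symm i))
    simpa [Ψ] using this
  have hbase := (tensorLI_fin hf k).map' Ψ hΨ
  have hre := hbase.comp (fun u : ι → Fin M => fun j => u (e j))
    (fun u₁ u₂ h => by
      funext i
      have := congrFun h (e.symm i)
      simpa using this)
  convert hre using 1
  funext u
  simp only [Function.comp, Ψ, LinearMap.coe_mk, AddHom.coe_mk]
  funext y
  exact (Equiv.prod_comp e (fun i => f (u i) (y i))).symm
  all_goals rfl

lemma span_eval_top {m Y : Type*} [Fintype m] [DecidableEq m] {F : m → Y → ℝ}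
    (hF : LinearIndependent ℝ F) :
    Submodule.span ℝ (Set.range fun y : Y => (fun u => F u y : m → ℝ)) = ⊤ := by
  by_contra hn
  obtain ⟨φ, φne, hφ⟩ := Submodule.exists_dual_map_eq_bot_of_lt_top
    (lt_top_iff_ne_top.2 hn) inferInstance
  set c : m → ℝ := fun u => φ (Pi.single u 1) with hc
  have hφw : ∀ w : m → ℝ, φ w = ∑ u, w u * c u := by
    intro w
    have hw : w = ∑ u, w u • (Pi.single u (1:ℝ) : m → ℝ) := by
      funext v
      simp [Finset.sum_apply, Pi.single_apply]
    conv_lhs => rw [hw]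
    simp [map_sum, c, smul_eq_mul]
  have hzero : ∀ u, c u = 0 := by
    apply Fintype.linearIndependent_iff.1 hF
    funext y
    have hmem : (fun u => F u y : m → ℝ) ∈ Submodule.span ℝ
        (Set.range fun y : Y => (fun u => F u y : m → ℝ)) :=
      Submodule.subset_span ⟨y, rfl⟩
    have : φ (fun u => F u y) = 0 := by
      have := hφ ▸ Submodule.mem_map_of_mem (f := φ) hmem
      simpa using this
    rw [hφw] at this
    simp only [Finset.sum_apply, Pi.smul_apply, smul_eq_mul, Pi.zero_apply]
    rw [← this]
    exact Finset.sum_congr rfl fun u _ => mul_comm _ _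
  apply φne
  apply LinearMap.ext
  intro w
  simp [hφw, hzero]

lemma rank_le_of_repr {m n Y Z : Type*} [Fintype m] [Fintype n] [DecidableEq m] [DecidableEq n]
    (Mx : Matrix m n ℝ) {F : m → Y → ℝ} {G : n → Z → ℝ}
    (hF : LinearIndependent ℝ F) (hG : LinearIndependent ℝ G)
    {R : ℕ} (g : Fin R → Y → ℝ) (g' : Fin R → Z → ℝ)
    (hrep : ∀ y z, ∑ u, ∑ v, Mx u v * F u y * G v z = ∑ ν, g ν y * g' ν z) :
    Mx.rank ≤ R := by
  classical
  -- the span of the right factors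
  let W : Submodule ℝ (Z → ℝ) := Submodule.span ℝ (Set.range g')
  have hWfd : FiniteDimensional ℝ W := FiniteDimensional.span_of_finite ℝ (Set.finite_range g')
  have hWr : Module.finrank ℝ W ≤ R := by
    have := finrank_span_le_card (R := ℝ) (Set.range g')
    refine le_trans this ?_
    simpa using Finset.card_image_le (s := Finset.univ) (f := g')
  -- the linear map sending coefficients to combinations of G
  let Φ : (n → ℝ) →ₗ[ℝ] (Z → ℝ) :=
    { toFun := fun cv => fun z => ∑ v, cv v * G v z
      map_add' := by
        intro c₁ c₂; funext z
        simp [add_mul, Finset.sum_add_distrib]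
      map_smul' := by
        intro r cv; funext z
        simp [Finset.mul_sum, mul_assoc] }
  have hΦinj : Function.Injective Φ := by
    rw [← LinearMap.ker_eq_bot, LinearMap.ker_eq_bot']
    intro cv hcv
    refine funext (Fintype.linearIndependent_iff.1 hG cv ?_)
    funext z
    have := congrFun hcv z
    simpa [Φ, Finset.sum_apply] using this
  let V : Submodule ℝ (n → ℝ) := Submodule.comap Φ W
  have hVW : Module.finrank ℝ V ≤ Module.finrank ℝ W := by
    have : Function.Injective (Φ.restrict (fun x hx => hx) : V →ₗ[ℝ] W) := by
      intro a b hab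
      exact Subtype.ext (hΦinj (congrArg Subtype.val hab))
    exact LinearMap.finrank_le_finrank_of_injective this
  -- the vectors c(y) lie in V
  have hcy : ∀ y : Y, Mxᵀ.mulVec (fun u => F u y) ∈ V := by
    intro y
    show Φ (Mxᵀ.mulVec (fun u => F u y)) ∈ W
    have : Φ (Mxᵀ.mulVec (fun u => F u y)) = ∑ ν, g ν y • g' ν := by
      funext z
      simp only [Φ, LinearMap.coe_mk, AddHom.coe_mk, Matrix.mulVec, dotProduct,
        Matrix.transpose_apply, Finset.sum_apply, Pi.smul_apply, smul_eq_mul]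
      rw [← hrep y z, Finset.sum_comm]
      refine Finset.sum_congr rfl fun v _ => ?_
      rw [Finset.sum_mul]
    rw [this]
    exact Submodule.sum_mem _ fun ν _ =>
      Submodule.smul_mem _ _ (Submodule.subset_span ⟨ν, rfl⟩)
  -- rank of Mx equals rank of Mxᵀ, whose range is contained in V
  have hrange : LinearMap.range Mxᵀ.mulVecLin ≤ V := by
    rw [← Submodule.map_top, ← span_eval_top hF, Submodule.map_span]
    rw [Submodule.span_le]
    rintro _ ⟨_, ⟨y, rfl⟩, rfl⟩
    exact hcy y
  have : Mxᵀ.rank ≤ Module.finrank ℝ V := by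
    rw [Matrix.rank]
    exact Submodule.finrank_mono hrange
  calc Mx.rank = Mxᵀ.rank := (Matrix.rank_transpose Mx).symm
  _ ≤ Module.finrank ℝ V := this
  _ ≤ Module.finrank ℝ W := hVW
  _ ≤ R := hWr

lemma exists_factorization {m n : Type*} [Fintype m] [Fintype n] (Mx : Matrix m n ℝ) :
    ∃ (C : m → Fin Mx.rank → ℝ) (D : Fin Mx.rank → n → ℝ),
      ∀ u v, Mx u v = ∑ ν, C u ν * D ν v := by
  classical
  set S : Submodule ℝ (m → ℝ) := Submodule.span ℝ (Set.range Mxᵀ) with hS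
  have hfd : FiniteDimensional ℝ S := FiniteDimensional.span_of_finite ℝ (Set.finite_range Mxᵀ)
  have hr : Module.finrank ℝ S = Mx.rank := (Matrix.rank_eq_finrank_span_cols Mx).symm
  let b : Module.Basis (Fin Mx.rank) ℝ S := Module.finBasisOfFinrankEq ℝ S hr
  have hcol : ∀ v : n, (fun u => Mx u v) ∈ S := fun v =>
    Submodule.subset_span ⟨v, rfl⟩
  refine ⟨fun u ν => (b ν : m → ℝ) u, fun ν v => b.repr ⟨fun u => Mx u v, hcol v⟩ ν, ?_⟩
  intro u v
  have := b.sum_repr ⟨fun u => Mx u v, hcol v⟩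
  have h2 := congrFun (congrArg (Subtype.val) this) u
  have h2' : Mx u v = ((∑ ν, b.repr ⟨fun u => Mx u v, hcol v⟩ ν • b ν : S) : m → ℝ) u := h2.symm
  rw [h2']
  have h3 : ((∑ ν, b.repr ⟨fun u => Mx u v, hcol v⟩ ν • b ν : S) : m → ℝ) u
      = ∑ ν, b.repr ⟨fun u => Mx u v, hcol v⟩ ν • ((b ν : m → ℝ) u) := by
    rw [AddSubmonoidClass.coe_finset_sum]
    simp [Finset.sum_apply]
  rw [h3]
  exact Finset.sum_congr rfl fun ν _ => by simp [mul_comm]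


open MeasureTheory

noncomputable section

/-- Matricization of a tensor `A` of order `N` and dimension `M` in each mode, with
respect to a partition `(I, J)` of `Fin N` (given `I ∪ J = univ`). -/
def matricize {N M : ℕ} (A : (Fin N → Fin M) → ℝ) (I J : Finset (Fin N))
    (hU : I ∪ J = Finset.univ) :
    Matrix ({n // n ∈ I} → Fin M) ({n // n ∈ J} → Fin M) ℝ :=
  Matrix.of fun u v => A fun n =>
    if h : n ∈ I then u ⟨n, h⟩
    else v ⟨n, by
      have hn : n ∈ I ∪ J := by rw [hU]; exact Finset.mem_univ n
      exact (Finset.mem_union.mp hn).resolve_left h⟩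

/-- The function realized with coefficient tensor `A` and representation functions `f`. -/
def realized {N M s : ℕ} (f : Fin M → (Fin s → ℝ) → ℝ)
    (A : (Fin N → Fin M) → ℝ) : (Fin N → (Fin s → ℝ)) → ℝ :=
  fun x => ∑ d : Fin N → Fin M, A d * ∏ i, f (d i) (x i)

/-- Separation rank of `h` with respect to the partition `(I, J)`. -/
def sepRank {N s : ℕ} (I J : Finset (Fin N))
    (h : (Fin N → (Fin s → ℝ)) → ℝ) : ℕ :=
  sInf {R : ℕ |
    ∃ (g : Fin R → ({n // n ∈ I} → (Fin s → ℝ)) → ℝ)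
      (g' : Fin R → ({n // n ∈ J} → (Fin s → ℝ)) → ℝ),
      (∀ ν, Measurable (g ν)) ∧ (∀ ν, MemLp (g ν) 2 volume) ∧
      (∀ ν, Measurable (g' ν)) ∧ (∀ ν, MemLp (g' ν) 2 volume) ∧
      ∀ x : Fin N → (Fin s → ℝ),
        h x = ∑ ν, g ν (fun n => x n.1) * g' ν (fun n => x n.1)}

set_option maxHeartbeats 1000000 in
theorem stmt0 (N M s : ℕ) (f : Fin M → (Fin s → ℝ) → ℝ)
    (hfm : ∀ d, Measurable (f d)) (hfL2 : ∀ d, MemLp (f d) 2 volume)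
    (hfind : LinearIndependent ℝ f)
    (A : (Fin N → Fin M) → ℝ)
    (I J : Finset (Fin N)) (hdisj : Disjoint I J) (hU : I ∪ J = Finset.univ) :
    sepRank I J (realized f A) = (matricize A I J hU).rank := by
  classical
  set Mx := matricize A I J hU with hMxdef
  have memJ : ∀ n : Fin N, n ∉ I → n ∈ J := fun n h => by
    have hn : n ∈ I ∪ J := by rw [hU]; exact Finset.mem_univ n
    exact (Finset.mem_union.mp hn).resolve_left h
  have notI : ∀ n : Fin N, n ∈ J → n ∉ I := fun n hn => Finset.disjoint_right.mp hdisj hn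
  -- the two factor families
  set F : ({n // n ∈ I} → Fin M) → ({n // n ∈ I} → (Fin s → ℝ)) → ℝ :=
    fun u y => ∏ n, f (u n) (y n) with hFdef
  set G : ({n // n ∈ J} → Fin M) → ({n // n ∈ J} → (Fin s → ℝ)) → ℝ :=
    fun v z => ∏ n, f (v n) (z n) with hGdef
  have hF : LinearIndependent ℝ F := tensorLI hfind
  have hG : LinearIndependent ℝ G := tensorLI hfind
  -- combining equiv
  let E : (Fin N → Fin M) ≃ (({n // n ∈ I} → Fin M) × ({n // n ∈ J} → Fin M)) :=
    { toFun := fun d => (fun n => d n.1, fun n => d n.1)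
      invFun := fun p => fun n => if h : n ∈ I then p.1 ⟨n, h⟩ else p.2 ⟨n, memJ n h⟩
      left_inv := by
        intro d; funext n
        by_cases h : n ∈ I
        · simp [h]
        · simp [h]
      right_inv := by
        intro p
        refine Prod.ext (funext fun n => ?_) (funext fun n => ?_)
        · simp [n.2]
        · simp [notI n.1 n.2] }
  -- key identity
  have hkey : ∀ x : Fin N → (Fin s → ℝ), realized f A x =
      ∑ u, ∑ v, Mx u v * F u (fun n => x n.1) * G v (fun n => x n.1) := by
    intro x
    show (∑ d : Fin N → Fin M, A d * ∏ i, f (d i) (x i)) = _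
    rw [← Equiv.sum_comp E.symm (fun d => A d * ∏ i, f (d i) (x i)), Fintype.sum_prod_type]
    refine Finset.sum_congr rfl fun u _ => Finset.sum_congr rfl fun v _ => ?_
    have hA : A (E.symm (u, v)) = Mx u v := rfl
    rw [hA]
    have hprod : (∏ i, f ((E.symm (u, v)) i) (x i)) =
        F u (fun n => x n.1) * G v (fun n => x n.1) := by
      have hsplit : (Finset.univ : Finset (Fin N)) = I ∪ J := hU.symm
      rw [hsplit, Finset.prod_union hdisj]
      congr 1
      · rw [hFdef]
        rw [← Finset.prod_attach I (fun i => f ((E.symm (u, v)) i) (x i)),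
          ← Finset.univ_eq_attach]
        refine Finset.prod_congr rfl fun n _ => ?_
        have : (E.symm (u, v)) n.1 = u n := dif_pos n.2
        rw [this]
      · rw [hGdef]
        rw [← Finset.prod_attach J (fun i => f ((E.symm (u, v)) i) (x i)),
          ← Finset.univ_eq_attach]
        refine Finset.prod_congr rfl fun n _ => ?_
        have : (E.symm (u, v)) n.1 = v n := by
          show (if h : n.1 ∈ I then u ⟨n.1, h⟩ else v ⟨n.1, memJ n.1 h⟩) = v n
          rw [dif_neg (notI n.1 n.2)]
        rw [this]
    rw [hprod, mul_assoc]
  -- measurability and L² of the factor families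
  have hFm : ∀ u, Measurable (F u) := by
    intro u
    exact Finset.measurable_prod Finset.univ fun n _ =>
      (hfm (u n)).comp (measurable_pi_apply n)
  have hGm : ∀ v, Measurable (G v) := by
    intro v
    exact Finset.measurable_prod Finset.univ fun n _ =>
      (hfm (v n)).comp (measurable_pi_apply n)
  have hFL2 : ∀ u, MemLp (F u) 2 volume := by
    intro u
    rw [memLp_two_iff_integrable_sq (hFm u).aestronglyMeasurable]
    have : (fun y => (F u y) ^ 2) =
        fun y : {n // n ∈ I} → (Fin s → ℝ) => ∏ n, (f (u n) (y n)) ^ 2 := by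
      funext y
      rw [hFdef]
      exact (Finset.prod_pow _ _ _).symm
    rw [this]
    exact Integrable.fintype_prod (f := fun n t => (f (u n) t) ^ 2)
      fun n => (hfL2 (u n)).integrable_sq
  have hGL2 : ∀ v, MemLp (G v) 2 volume := by
    intro v
    rw [memLp_two_iff_integrable_sq (hGm v).aestronglyMeasurable]
    have : (fun z => (G v z) ^ 2) =
        fun z : {n // n ∈ J} → (Fin s → ℝ) => ∏ n, (f (v n) (z n)) ^ 2 := by
      funext z
      rw [hGdef]
      exact (Finset.prod_pow _ _ _).symm
    rw [this]
    exact Integrable.fintype_prod (f := fun n t => (f (v n) t) ^ 2)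
      fun n => (hfL2 (v n)).integrable_sq
  -- membership: rank many terms suffice
  obtain ⟨C, D, hCD⟩ := exists_factorization Mx
  have hmem : Mx.rank ∈ {R : ℕ |
      ∃ (g : Fin R → ({n // n ∈ I} → (Fin s → ℝ)) → ℝ)
        (g' : Fin R → ({n // n ∈ J} → (Fin s → ℝ)) → ℝ),
        (∀ ν, Measurable (g ν)) ∧ (∀ ν, MemLp (g ν) 2 volume) ∧
        (∀ ν, Measurable (g' ν)) ∧ (∀ ν, MemLp (g' ν) 2 volume) ∧
        ∀ x : Fin N → (Fin s → ℝ),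
          realized f A x = ∑ ν, g ν (fun n => x n.1) * g' ν (fun n => x n.1)} := by
    refine ⟨fun ν y => ∑ u, C u ν * F u y, fun ν z => ∑ v, D ν v * G v z,
      ?_, ?_, ?_, ?_, ?_⟩
    · intro ν
      exact Finset.measurable_sum Finset.univ fun u _ => (hFm u).const_mul (C u ν)
    · intro ν
      exact memLp_finset_sum Finset.univ fun u _ => (hFL2 u).const_mul (C u ν)
    · intro ν
      exact Finset.measurable_sum Finset.univ fun v _ => (hGm v).const_mul (D ν v)
    · intro ν
      exact memLp_finset_sum Finset.univ fun v _ => (hGL2 v).const_mul (D ν v)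
    · intro x
      rw [hkey x]
      set y := fun n : {n // n ∈ I} => x n.1
      set z := fun n : {n // n ∈ J} => x n.1
      calc ∑ u, ∑ v, Mx u v * F u y * G v z
          = ∑ u, ∑ v, ∑ ν, (C u ν * F u y) * (D ν v * G v z) := by
            refine Finset.sum_congr rfl fun u _ => Finset.sum_congr rfl fun v _ => ?_
            rw [hCD u v, Finset.sum_mul, Finset.sum_mul]
            exact Finset.sum_congr rfl fun ν _ => by ring
        _ = ∑ u, ∑ ν, ∑ v, (C u ν * F u y) * (D ν v * G v z) :=
            Finset.sum_congr rfl fun u _ => Finset.sum_comm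
        _ = ∑ ν, ∑ u, ∑ v, (C u ν * F u y) * (D ν v * G v z) := Finset.sum_comm
        _ = ∑ ν, (∑ u, C u ν * F u y) * (∑ v, D ν v * G v z) := by
            refine Finset.sum_congr rfl fun ν _ => ?_
            rw [Finset.sum_mul_sum]
  -- lower bound
  have hlb : ∀ R ∈ {R : ℕ |
      ∃ (g : Fin R → ({n // n ∈ I} → (Fin s → ℝ)) → ℝ)
        (g' : Fin R → ({n // n ∈ J} → (Fin s → ℝ)) → ℝ),
        (∀ ν, Measurable (g ν)) ∧ (∀ ν, MemLp (g ν) 2 volume) ∧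
        (∀ ν, Measurable (g' ν)) ∧ (∀ ν, MemLp (g' ν) 2 volume) ∧
        ∀ x : Fin N → (Fin s → ℝ),
          realized f A x = ∑ ν, g ν (fun n => x n.1) * g' ν (fun n => x n.1)},
      Mx.rank ≤ R := by
    rintro R ⟨g, g', -, -, -, -, hrepx⟩
    refine rank_le_of_repr Mx hF hG g g' ?_
    intro y z
    set x : Fin N → (Fin s → ℝ) :=
      fun n => if h : n ∈ I then y ⟨n, h⟩ else z ⟨n, memJ n h⟩ with hxdef
    have hy : (fun n : {n // n ∈ I} => x n.1) = y := by
      funext n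
      show (if h : n.1 ∈ I then y ⟨n.1, h⟩ else z ⟨n.1, memJ n.1 h⟩) = y n
      rw [dif_pos n.2]
    have hz : (fun n : {n // n ∈ J} => x n.1) = z := by
      funext n
      show (if h : n.1 ∈ I then y ⟨n.1, h⟩ else z ⟨n.1, memJ n.1 h⟩) = z n
      rw [dif_neg (notI n.1 n.2)]
    have h1 := hkey x
    have h2 := hrepx x
    rw [hy, hz] at h1 h2
    rw [← h1, h2]
  exact le_antisymm (Nat.sInf_le hmem) (le_csInf ⟨Mx.rank, hmem⟩ hlb)
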